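/- Let N ≥ 1, s ∈ (1/2,1), and let u(x) = g(|x|) where g satisfies both radial profile hypotheses (H1) and (H2). Then for every x ≠ 0: (a) if 1 ≤ k < N, then 𝓘_k^- u(x) = k 𝓘_{x^⊥} u(x), where x^⊥ is any unit vector orthogonal to x; (b) 𝓘_N^- u(x) = N 𝓘_{ξ*} u(x), where ξ* ∈ ℝ^N is any unit vector with ⟨x/|x|, ξ*⟩ = 1/√N. In particular the infimum defining 𝓘_N^- u(x) is attained at an orthonormal basis all of whose elements form the same angle with the radial direction. -/

import Mathlib

open MeasureTheory Real Set

noncomputable section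

abbrev E (N : ℕ) := EuclideanSpace ℝ (Fin N)

/-- The one-dimensional directional fractional operator `𝓘_ξ u(x)`. -/
noncomputable def Iop (N : ℕ) (s Cs : ℝ) (u : E N → ℝ) (ξ x : E N) : ℝ :=
  Cs * ∫ τ in Ioi (0:ℝ), (u (x + τ • ξ) + u (x - τ • ξ) - 2 * u x) * τ ^ (-(1 + 2*s))

/-- `𝓘_k^- u(x)`: infimum over orthonormal `k`-frames. -/
noncomputable def IkMinus (N k : ℕ) (s Cs : ℝ) (u : E N → ℝ) (x : E N) : ℝ :=
  ⨅ ξ : {ξ : Fin k → E N // Orthonormal ℝ ξ}, ∑ i, Iop N s Cs u (ξ.1 i) x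

def gtilde (g : ℝ → ℝ) : ℝ → ℝ := fun t => g (Real.sqrt t)

/-- `g ∈ L¹_σ(ρ,∞)`. -/
def MemL1w (σ ρ : ℝ) (g : ℝ → ℝ) : Prop :=
  IntegrableOn (fun τ => g τ / (1 + τ ^ (1 + σ))) (Ioi ρ)

/-- The radial profile hypothesis (H1). -/
def HypH1 (s : ℝ) (g : ℝ → ℝ) : Prop :=
  ContDiffOn ℝ 2 g (Ioi 0) ∧ MemL1w (2*s) 0 g ∧
  MonotoneOn (deriv (gtilde g)) (Ioi 0) ∧
  ∃ ρ > 0, MemL1w (s - 1/2) ρ (deriv (gtilde g))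

/-- The radial profile hypothesis (H2). -/
def HypH2 (s : ℝ) (g : ℝ → ℝ) : Prop :=
  ContDiffOn ℝ 2 g (Ioi 0) ∧ MemL1w (2*s) 0 g ∧
  (∃ ρ > 0, MemL1w (s - 1/2) ρ (deriv (gtilde g))) ∧
  ConvexOn ℝ (Ioi 0) (deriv (deriv (gtilde g)))

namespace Stmt4

variable {s : ℝ}

variable {g : ℝ → ℝ}

lemma gtilde_contDiffOn (hg : ContDiffOn ℝ 2 g (Ioi 0)) :
    ContDiffOn ℝ 2 (gtilde g) (Ioi 0) := by
  have hsq : ContDiffOn ℝ 2 Real.sqrt (Ioi 0) := fun x hx =>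
    (Real.contDiffAt_sqrt (ne_of_gt hx)).contDiffWithinAt
  exact hg.comp hsq fun x hx => Real.sqrt_pos.2 hx

lemma gtilde_hasDerivAt (hg : ContDiffOn ℝ 2 g (Ioi 0)) {t : ℝ} (ht : 0 < t) :
    HasDerivAt (gtilde g) (deriv (gtilde g) t) t := by
  have h := (gtilde_contDiffOn hg).differentiableOn (by norm_num)
  exact (h.differentiableAt (isOpen_Ioi.mem_nhds ht)).hasDerivAt

lemma gtilde_deriv_contDiffOn (hg : ContDiffOn ℝ 2 g (Ioi 0)) :
    ContDiffOn ℝ 1 (deriv (gtilde g)) (Ioi 0) :=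
  (gtilde_contDiffOn hg).deriv_of_isOpen isOpen_Ioi (by norm_num)

lemma gtilde_deriv_hasDerivAt (hg : ContDiffOn ℝ 2 g (Ioi 0)) {t : ℝ} (ht : 0 < t) :
    HasDerivAt (deriv (gtilde g)) (deriv (deriv (gtilde g)) t) t := by
  have h := (gtilde_deriv_contDiffOn hg).differentiableOn (by norm_num)
  exact (h.differentiableAt (isOpen_Ioi.mem_nhds ht)).hasDerivAt

lemma gtilde_deriv2_contOn (hg : ContDiffOn ℝ 2 g (Ioi 0)) :
    ContinuousOn (deriv (deriv (gtilde g))) (Ioi 0) :=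
  (gtilde_deriv_contDiffOn hg).continuousOn_deriv_of_isOpen isOpen_Ioi (le_refl 1)

lemma spread {φ : ℝ → ℝ} {S : Set ℝ} (hφ : ConvexOn ℝ S φ) {A δ₁ δ₂ : ℝ}
    (h0 : 0 ≤ δ₁) (h12 : δ₁ ≤ δ₂) (hp : A + δ₂ ∈ S) (hm : A - δ₂ ∈ S) :
    φ (A + δ₁) + φ (A - δ₁) ≤ φ (A + δ₂) + φ (A - δ₂) := by
  rcases eq_or_lt_of_le (h0.trans h12) with h | h
  · have h1 : δ₁ = 0 := le_antisymm (h12.trans h.symm.le) h0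
    have h2 : δ₂ = 0 := h.symm
    rw [h1, h2]
  · set μ : ℝ := (δ₂ + δ₁) / (2 * δ₂) with hμ
    have hμ0 : 0 ≤ μ := by positivity
    have hμ1 : 0 ≤ 1 - μ := by
      have : μ ≤ 1 := by rw [hμ, div_le_one (by linarith)]; linarith
      linarith
    have c1 := hφ.2 hp hm hμ0 hμ1 (by ring)
    have c2 := hφ.2 hp hm hμ1 hμ0 (by ring)
    have e1 : μ • (A + δ₂) + (1 - μ) • (A - δ₂) = A + δ₁ := by
      simp only [smul_eq_mul]; rw [hμ]; field_simp; ring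
    have e2 : (1 - μ) • (A + δ₂) + μ • (A - δ₂) = A - δ₁ := by
      simp only [smul_eq_mul]; rw [hμ]; field_simp; ring
    rw [e1] at c1; rw [e2] at c2
    simp only [smul_eq_mul] at c1 c2
    linarith

lemma gtilde_convexOn (hg : ContDiffOn ℝ 2 g (Ioi 0))
    (hm : MonotoneOn (deriv (gtilde g)) (Ioi 0)) :
    ConvexOn ℝ (Ioi 0) (gtilde g) := by
  have h := gtilde_contDiffOn hg
  refine MonotoneOn.convexOn_of_deriv (convex_Ioi 0) h.continuousOn ?_ ?_
  · rw [interior_Ioi]; exact h.differentiableOn (by norm_num)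
  · rwa [interior_Ioi]




lemma gtilde_contOn (hg : ContDiffOn ℝ 2 g (Ioi 0)) : ContinuousOn (gtilde g) (Ioi 0) :=
  (gtilde_contDiffOn hg).continuousOn

/-- FTC representation of the symmetric difference of `deriv (gtilde g)`. -/
lemma Hdef (hg : ContDiffOn ℝ 2 g (Ioi 0)) {A B b : ℝ} (hAB : 0 < A - B)
    (hb0 : 0 < b) (hbB : b ≤ B) :
    deriv (gtilde g) (A + b) - deriv (gtilde g) (A - b)
      = b * ∫ t in (-1:ℝ)..1, deriv (deriv (gtilde g)) (A + b * t) := by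
  have harg : ∀ t ∈ uIcc (-1:ℝ) 1, 0 < A + b * t := by
    intro t ht
    rw [uIcc_of_le (by norm_num)] at ht
    nlinarith [ht.1, ht.2]
  have hderiv : ∀ t ∈ uIcc (-1:ℝ) 1,
      HasDerivAt (fun t => deriv (gtilde g) (A + b * t))
        (deriv (deriv (gtilde g)) (A + b * t) * b) t := by
    intro t ht
    have h1 : HasDerivAt (fun t : ℝ => A + b * t) b t := by
      simpa using ((hasDerivAt_id t).const_mul b).const_add A
    exact (gtilde_deriv_hasDerivAt hg (harg t ht)).comp t h1
  have hcont : ContinuousOn (fun t => deriv (deriv (gtilde g)) (A + b * t) * b)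
      (uIcc (-1:ℝ) 1) := by
    refine (ContinuousOn.comp (gtilde_deriv2_contOn hg) ?_ ?_).mul continuousOn_const
    · exact (continuous_const.add (continuous_const.mul continuous_id)).continuousOn
    · intro t ht; exact harg t ht
  have := intervalIntegral.integral_eq_sub_of_hasDerivAt hderiv
    (hcont.intervalIntegrable)
  rw [intervalIntegral.integral_mul_const] at this
  rw [show A + b = A + b * 1 by ring, show A - b = A + b * (-1) by ring]
  linarith [this]

lemma Hmono (hg : ContDiffOn ℝ 2 g (Ioi 0))
    (hcv : ConvexOn ℝ (Ioi 0) (deriv (deriv (gtilde g))))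
    {A B b₁ b₂ : ℝ} (hAB : 0 < A - B) (h1 : 0 < b₁) (h12 : b₁ ≤ b₂) (h2B : b₂ ≤ B) :
    (∫ t in (-1:ℝ)..1, deriv (deriv (gtilde g)) (A + b₁ * t))
      ≤ ∫ t in (-1:ℝ)..1, deriv (deriv (gtilde g)) (A + b₂ * t) := by
  set φ := deriv (deriv (gtilde g)) with hφ
  have harg : ∀ b t : ℝ, 0 < b → b ≤ B → t ∈ Icc (-1:ℝ) 1 → 0 < A + b * t := by
    intro b t hb hbB ht; nlinarith [ht.1, ht.2]
  have hcont : ∀ b : ℝ, 0 < b → b ≤ B →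
      ContinuousOn (fun t => φ (A + b * t)) (Icc (-1:ℝ) 1) := by
    intro b hb hbB
    refine ContinuousOn.comp (gtilde_deriv2_contOn hg) ?_ ?_
    · exact (continuous_const.add (continuous_const.mul continuous_id)).continuousOn
    · intro t ht; exact harg b t hb hbB ht
  have hcontm : ∀ b : ℝ, 0 < b → b ≤ B →
      ContinuousOn (fun t => φ (A - b * t)) (Icc (-1:ℝ) 1) := by
    intro b hb hbB
    refine ContinuousOn.comp (gtilde_deriv2_contOn hg) ?_ ?_
    · exact (continuous_const.sub (continuous_const.mul continuous_id)).continuousOn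
    · intro t ht
      have := harg b (-t) hb hbB ⟨by linarith [ht.2], by linarith [ht.1]⟩
      simpa [sub_eq_add_neg, mul_comm] using this
  -- symmetrization: ∫ φ(A + b t) = ∫ φ(A - b t)
  have hsym : ∀ b : ℝ, (∫ t in (-1:ℝ)..1, φ (A + b * t))
      = ∫ t in (-1:ℝ)..1, φ (A - b * t) := by
    intro b
    have := intervalIntegral.integral_comp_neg (a := (-1:ℝ)) (b := 1)
      (f := fun t => φ (A - b * t))
    simp only [neg_neg] at this
    rw [← this]
    congr 1; funext t; ring_nf
  have hii : ∀ b : ℝ, 0 < b → b ≤ B →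
      IntervalIntegrable (fun t => φ (A + b * t) + φ (A - b * t)) volume (-1) 1 := by
    intro b hb hbB
    apply ContinuousOn.intervalIntegrable
    rw [uIcc_of_le (by norm_num)]
    exact (hcont b hb hbB).add (hcontm b hb hbB)
  have hb2 : 0 < b₂ := h1.trans_le h12
  have hpt : ∀ t ∈ Icc (-1:ℝ) 1,
      φ (A + b₁ * t) + φ (A - b₁ * t) ≤ φ (A + b₂ * t) + φ (A - b₂ * t) := by
    intro t ht
    rcases le_total 0 t with h | h
    · have hd12 : b₁ * t ≤ b₂ * t := mul_le_mul_of_nonneg_right h12 h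
      have hp2 : A + b₂ * t ∈ Ioi (0:ℝ) := by
        simp only [mem_Ioi]; nlinarith [mul_nonneg hb2.le h]
      have hm2 : A - b₂ * t ∈ Ioi (0:ℝ) := by
        simp only [mem_Ioi]; nlinarith [mul_nonneg hb2.le (sub_nonneg.2 ht.2)]
      exact spread hcv (mul_nonneg h1.le h) hd12 hp2 hm2
    · have h' : (0:ℝ) ≤ -t := by linarith
      have hd12 : b₁ * -t ≤ b₂ * -t := mul_le_mul_of_nonneg_right h12 h'
      have hp2 : A + b₂ * -t ∈ Ioi (0:ℝ) := by
        simp only [mem_Ioi]; nlinarith [mul_nonneg hb2.le h']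
      have hm2 : A - b₂ * -t ∈ Ioi (0:ℝ) := by
        simp only [mem_Ioi]; nlinarith [mul_nonneg hb2.le (sub_nonneg.2 (neg_le.1 ht.1))]
      have hsp := spread hcv (mul_nonneg h1.le h') hd12 hp2 hm2
      have e1 : A + b₁ * -t = A - b₁ * t := by ring
      have e2 : A - b₁ * -t = A + b₁ * t := by ring
      have e3 : A + b₂ * -t = A - b₂ * t := by ring
      have e4 : A - b₂ * -t = A + b₂ * t := by ring
      rw [e1, e2, e3, e4] at hsp; linarith
  have hmono2 := intervalIntegral.integral_mono_on (by norm_num : (-1:ℝ) ≤ 1)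
    (hii b₁ h1 (h12.trans h2B)) (hii b₂ (h1.trans_le h12) h2B) hpt
  have hint : ∀ b : ℝ, 0 < b → b ≤ B →
      IntervalIntegrable (fun t => φ (A + b * t)) volume (-1) 1 ∧
      IntervalIntegrable (fun t => φ (A - b * t)) volume (-1) 1 := by
    intro b hb hbB
    constructor <;> apply ContinuousOn.intervalIntegrable <;>
      rw [uIcc_of_le (by norm_num)]
    · exact hcont b hb hbB
    · exact hcontm b hb hbB
  have hadd : ∀ b : ℝ, 0 < b → b ≤ B →
      (∫ t in (-1:ℝ)..1, (φ (A + b * t) + φ (A - b * t)))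
        = 2 * ∫ t in (-1:ℝ)..1, φ (A + b * t) := by
    intro b hb hbB
    rw [intervalIntegral.integral_add (hint b hb hbB).1 (hint b hb hbB).2, ← hsym b]
    ring
  rw [hadd b₁ h1 (h12.trans h2B), hadd b₂ (h1.trans_le h12) h2B] at hmono2
  linarith


lemma convexF (hg : ContDiffOn ℝ 2 g (Ioi 0))
    (hcv : ConvexOn ℝ (Ioi 0) (deriv (deriv (gtilde g))))
    {A B : ℝ} (hB : 0 < B) (hAB : 0 < A - B) :
    ConvexOn ℝ (Icc 0 1)
      (fun m => gtilde g (A + B * Real.sqrt m) + gtilde g (A - B * Real.sqrt m)) := by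
  have hsle : ∀ m ∈ Icc (0:ℝ) 1, Real.sqrt m ≤ 1 := by
    intro m hm
    rw [show (1:ℝ) = Real.sqrt 1 by rw [Real.sqrt_one]]
    exact Real.sqrt_le_sqrt hm.2
  have hargp : ∀ m ∈ Icc (0:ℝ) 1, 0 < A + B * Real.sqrt m := by
    intro m hm; nlinarith [Real.sqrt_nonneg m]
  have hargm : ∀ m ∈ Icc (0:ℝ) 1, 0 < A - B * Real.sqrt m := by
    intro m hm; nlinarith [hsle m hm]
  have hcontf : ContinuousOn (fun m => gtilde g (A + B * Real.sqrt m) + gtilde g (A - B * Real.sqrt m))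
      (Icc (0:ℝ) 1) := by
    have c1 : ContinuousOn (fun m : ℝ => A + B * Real.sqrt m) (Icc 0 1) :=
      (continuous_const.add (continuous_const.mul Real.continuous_sqrt)).continuousOn
    have c2 : ContinuousOn (fun m : ℝ => A - B * Real.sqrt m) (Icc 0 1) :=
      (continuous_const.sub (continuous_const.mul Real.continuous_sqrt)).continuousOn
    exact ((gtilde_contOn hg).comp c1 fun m hm => hargp m hm).add
      ((gtilde_contOn hg).comp c2 fun m hm => hargm m hm)
  have hder : ∀ m ∈ Ioo (0:ℝ) 1,
      HasDerivAt (fun m => gtilde g (A + B * Real.sqrt m) + gtilde g (A - B * Real.sqrt m))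
        ((deriv (gtilde g) (A + B * Real.sqrt m) - deriv (gtilde g) (A - B * Real.sqrt m))
          * (B / (2 * Real.sqrt m))) m := by
    intro m hm
    have hm' : m ∈ Icc (0:ℝ) 1 := Ioo_subset_Icc_self hm
    have hsm : Real.sqrt m ≠ 0 := ne_of_gt (Real.sqrt_pos.2 hm.1)
    have hs := Real.hasDerivAt_sqrt (ne_of_gt hm.1)
    have h1 : HasDerivAt (fun m : ℝ => A + B * Real.sqrt m)
        (B * (1 / (2 * Real.sqrt m))) m := (hs.const_mul B).const_add A
    have h2 : HasDerivAt (fun m : ℝ => A - B * Real.sqrt m)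
        (-(B * (1 / (2 * Real.sqrt m)))) m := by
      simpa [sub_eq_add_neg] using ((hs.const_mul B).neg).const_add A
    have hp : HasDerivAt (fun m => gtilde g (A + B * Real.sqrt m))
        (deriv (gtilde g) (A + B * Real.sqrt m) * (B * (1 / (2 * Real.sqrt m)))) m := by
      simpa [Function.comp_def] using (gtilde_hasDerivAt hg (hargp m hm')).comp m h1
    have hq : HasDerivAt (fun m => gtilde g (A - B * Real.sqrt m))
        (deriv (gtilde g) (A - B * Real.sqrt m) * -(B * (1 / (2 * Real.sqrt m)))) m := by
      simpa [Function.comp_def] using (gtilde_hasDerivAt hg (hargm m hm')).comp m h2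
    have hpq := hp.add hq
    exact hpq.congr_deriv (by ring)
  have hmono : MonotoneOn
      (deriv (fun m => gtilde g (A + B * Real.sqrt m) + gtilde g (A - B * Real.sqrt m))) (Ioo 0 1) := by
    intro m₁ hm₁ m₂ hm₂ h12
    rw [(hder m₁ hm₁).deriv, (hder m₂ hm₂).deriv]
    have hb1 : 0 < B * Real.sqrt m₁ := mul_pos hB (Real.sqrt_pos.2 hm₁.1)
    have hb2 : 0 < B * Real.sqrt m₂ := mul_pos hB (Real.sqrt_pos.2 hm₂.1)
    have hb12 : B * Real.sqrt m₁ ≤ B * Real.sqrt m₂ :=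
      mul_le_mul_of_nonneg_left (Real.sqrt_le_sqrt h12) hB.le
    have hb2B : B * Real.sqrt m₂ ≤ B := by
      have := hsle m₂ (Ioo_subset_Icc_self hm₂)
      nlinarith
    have e : ∀ m : ℝ, m ∈ Ioo (0:ℝ) 1 →
        (deriv (gtilde g) (A + B * Real.sqrt m) - deriv (gtilde g) (A - B * Real.sqrt m))
          * (B / (2 * Real.sqrt m))
        = (B^2/2) * ∫ t in (-1:ℝ)..1, deriv (deriv (gtilde g)) (A + (B * Real.sqrt m) * t) := by
      intro m hm
      have hbm : 0 < B * Real.sqrt m := mul_pos hB (Real.sqrt_pos.2 hm.1)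
      have hbmB : B * Real.sqrt m ≤ B := by
        have := hsle m (Ioo_subset_Icc_self hm); nlinarith
      have hsm : Real.sqrt m ≠ 0 := ne_of_gt (Real.sqrt_pos.2 hm.1)
      rw [Hdef hg hAB hbm hbmB]
      field_simp
    rw [e m₁ hm₁, e m₂ hm₂]
    exact mul_le_mul_of_nonneg_left
      (Hmono hg hcv hAB hb1 hb12 hb2B) (by positivity)
  refine MonotoneOn.convexOn_of_deriv (convex_Icc 0 1) hcontf ?_ ?_
  · rw [interior_Icc]
    exact fun m hm => ((hder m hm).differentiableAt).differentiableWithinAt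
  · rw [interior_Icc]; exact hmono


/-- The radial bracket. -/
def Kb (g : ℝ → ℝ) (r p τ : ℝ) : ℝ :=
  gtilde g (r^2 + τ^2 + 2*τ*p) + gtilde g (r^2 + τ^2 - 2*τ*p) - 2 * gtilde g (r^2)

lemma pair_eq {r τ : ℝ} (hr : 0 < r) (p : ℝ) :
    gtilde g (r^2 + τ^2 + 2*τ*r * Real.sqrt (p^2/r^2))
      + gtilde g (r^2 + τ^2 - 2*τ*r * Real.sqrt (p^2/r^2))
    = gtilde g (r^2 + τ^2 + 2*τ*p) + gtilde g (r^2 + τ^2 - 2*τ*p) := by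
  have h1 : Real.sqrt (p^2/r^2) = |p|/r := by
    rw [show p^2/r^2 = (|p|/r)^2 by rw [div_pow, sq_abs], Real.sqrt_sq (by positivity)]
  have h2 : 2*τ*r * (|p|/r) = 2*τ*|p| := by field_simp
  rw [h1, h2]
  rcases abs_cases p with ⟨hpe, _⟩ | ⟨hpe, _⟩
  · rw [hpe]
  · rw [hpe]
    have e1 : r^2 + τ^2 + 2*τ*(-p) = r^2 + τ^2 - 2*τ*p := by ring
    have e2 : r^2 + τ^2 - 2*τ*(-p) = r^2 + τ^2 + 2*τ*p := by ring
    rw [e1, e2, add_comm]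

lemma mono_pt (hg : ContDiffOn ℝ 2 g (Ioi 0))
    (hm : MonotoneOn (deriv (gtilde g)) (Ioi 0))
    {r p τ : ℝ} (hr : 0 < r) (hτ : 0 < τ) (hτr : τ ≠ r) (hp : |p| ≤ r) :
    Kb g r 0 τ ≤ Kb g r p τ := by
  have hcx := gtilde_convexOn hg hm
  have hrτ : (0:ℝ) < (r - τ)^2 :=
    pow_two_pos_of_ne_zero (sub_ne_zero.2 (Ne.symm hτr))
  have hplus : r^2 + τ^2 + 2*τ*|p| ∈ Ioi (0:ℝ) := by
    simp only [mem_Ioi]; nlinarith [abs_nonneg p]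
  have hminus : r^2 + τ^2 - 2*τ*|p| ∈ Ioi (0:ℝ) := by
    simp only [mem_Ioi]; nlinarith
  have h := spread hcx (le_refl (0:ℝ)) (by positivity : (0:ℝ) ≤ 2*τ*|p|) hplus hminus
  simp only [add_zero, sub_zero] at h
  unfold Kb
  simp only [mul_zero, add_zero, sub_zero]
  rcases abs_cases p with ⟨hpe, _⟩ | ⟨hpe, _⟩
  · rw [← hpe]
    have e : r^2 + τ^2 + 2*τ*|p| = r^2 + τ^2 + 2*τ*|p| := rfl
    linarith [h]
  · have e1 : r^2 + τ^2 + 2*τ*p = r^2 + τ^2 - 2*τ*|p| := by rw [hpe]; ring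
    have e2 : r^2 + τ^2 - 2*τ*p = r^2 + τ^2 + 2*τ*|p| := by rw [hpe]; ring
    rw [e1, e2]
    linarith [h]

lemma jensen_pt (hg : ContDiffOn ℝ 2 g (Ioi 0))
    (hcv : ConvexOn ℝ (Ioi 0) (deriv (deriv (gtilde g))))
    {N : ℕ} (hN : 1 ≤ N) {r τ q : ℝ} (hr : 0 < r) (hτ : 0 < τ) (hτr : τ ≠ r)
    (p : Fin N → ℝ) (hp : ∑ i, (p i)^2 = r^2) (hq : q^2 = r^2 / N) :
    (N : ℝ) * Kb g r q τ ≤ ∑ i, Kb g r (p i) τ := by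
  have hNR : (0:ℝ) < N := by exact_mod_cast hN
  have hB : (0:ℝ) < 2*τ*r := by positivity
  have hrτ : (0:ℝ) < (r - τ)^2 :=
    pow_two_pos_of_ne_zero (sub_ne_zero.2 (Ne.symm hτr))
  have hAB : (0:ℝ) < (r^2 + τ^2) - 2*τ*r := by nlinarith
  have hf := convexF hg hcv hB hAB
  set f : ℝ → ℝ := fun m =>
    gtilde g (r^2 + τ^2 + 2*τ*r * Real.sqrt m) + gtilde g (r^2 + τ^2 - 2*τ*r * Real.sqrt m)
    with hfdef
  have hfc : ConvexOn ℝ (Icc 0 1) f := hf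
  have hmem : ∀ i : Fin N, (p i)^2 / r^2 ∈ Icc (0:ℝ) 1 := by
    intro i
    constructor
    · positivity
    · rw [div_le_one (by positivity)]
      calc (p i)^2 ≤ ∑ j, (p j)^2 :=
            Finset.single_le_sum (fun j _ => sq_nonneg (p j)) (Finset.mem_univ i)
        _ = r^2 := hp
  have hw1 : ∑ _i : Fin N, (N:ℝ)⁻¹ = 1 := by
    rw [Finset.sum_const, Finset.card_univ, Fintype.card_fin, nsmul_eq_mul]
    field_simp
  have hj := hfc.map_sum_le (fun i _ => by positivity) hw1 (fun i _ => hmem i)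
  have hsum : (∑ i, (N:ℝ)⁻¹ • ((p i)^2/r^2)) = (N:ℝ)⁻¹ := by
    simp only [smul_eq_mul]
    rw [← Finset.mul_sum, ← Finset.sum_div, hp]
    field_simp
  rw [hsum] at hj
  simp only [smul_eq_mul] at hj
  rw [← Finset.mul_sum] at hj
  have hNf : (N:ℝ) * f ((N:ℝ)⁻¹) ≤ ∑ i, f ((p i)^2/r^2) := by
    have := mul_le_mul_of_nonneg_left hj hNR.le
    rwa [← mul_assoc, mul_inv_cancel₀ (ne_of_gt hNR), one_mul] at this
  have hqm : q^2/r^2 = (N:ℝ)⁻¹ := by rw [hq]; field_simp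
  have hKq : f ((N:ℝ)⁻¹) = Kb g r q τ + 2 * gtilde g (r^2) := by
    rw [← hqm]
    show gtilde g (r^2 + τ^2 + 2*τ*r * Real.sqrt (q^2/r^2))
      + gtilde g (r^2 + τ^2 - 2*τ*r * Real.sqrt (q^2/r^2)) = _
    rw [pair_eq hr q]; unfold Kb; ring
  have hKp : ∀ i : Fin N, f ((p i)^2/r^2) = Kb g r (p i) τ + 2 * gtilde g (r^2) := by
    intro i
    show gtilde g (r^2 + τ^2 + 2*τ*r * Real.sqrt ((p i)^2/r^2))
      + gtilde g (r^2 + τ^2 - 2*τ*r * Real.sqrt ((p i)^2/r^2)) = _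
    rw [pair_eq hr (p i)]; unfold Kb; ring
  have hsum2 : ∑ i, f ((p i)^2/r^2)
      = (∑ i, Kb g r (p i) τ) + (N:ℝ) * (2 * gtilde g (r^2)) := by
    rw [Finset.sum_congr rfl (fun i _ => hKp i), Finset.sum_add_distrib,
      Finset.sum_const, Finset.card_univ, Fintype.card_fin, nsmul_eq_mul]
  rw [hKq] at hNf
  rw [hsum2] at hNf
  linarith


lemma tail_integrable (hgc : ContinuousOn g (Ioi 0))
    (hL : IntegrableOn (fun σ => g σ / (1 + σ ^ (1+2*s))) (Ioi 0))
    (hs : s ∈ Ioo (1/2:ℝ) 1) {r q : ℝ} (hr : 0 < r) (hq : |q| ≤ r) :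
    IntegrableOn (fun τ => |g (Real.sqrt (τ^2 - 2*q*τ + r^2))| * τ ^ (-(1+2*s)))
      (Ioi (r/2)) := by
  set c := 1 + 2*s with hcdef
  have hc0 : 0 < c := by simp only [hcdef]; linarith [hs.1]
  have hf₀ : IntegrableOn (fun σ => |g σ| / (1 + σ ^ c)) (Ioi 0) := by
    have habs : IntegrableOn (fun σ => |g σ / (1 + σ ^ c)|) (Ioi 0) := hL.abs
    refine habs.congr_fun (fun σ hσ => ?_) measurableSet_Ioi
    have h1 : (0:ℝ) < 1 + σ ^ c := by
      have : (0:ℝ) < σ := hσ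
      positivity
    dsimp only; rw [abs_div, abs_of_pos h1]
  set d := Real.sqrt (r^2 - q^2) with hd
  have hd0 : 0 ≤ d := Real.sqrt_nonneg _
  have hq2 : q^2 ≤ r^2 := by nlinarith [sq_abs q, abs_nonneg q]
  have hd2 : d^2 = r^2 - q^2 := Real.sq_sqrt (by linarith)
  set ρ : ℝ → ℝ := fun τ => Real.sqrt (τ^2 - 2*q*τ + r^2) with hρdef
  have hPnn : ∀ τ : ℝ, 0 ≤ τ^2 - 2*q*τ + r^2 := by
    intro τ; nlinarith [sq_nonneg (τ - q)]
  have hρsq : ∀ τ, (ρ τ)^2 = τ^2 - 2*q*τ + r^2 := fun τ => Real.sq_sqrt (hPnn τ)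
  have hρnn : ∀ τ, 0 ≤ ρ τ := fun τ => Real.sqrt_nonneg _
  have hρ_ge_abs : ∀ τ, |τ - q| ≤ ρ τ := by
    intro τ
    rw [show |τ - q| = Real.sqrt ((τ-q)^2) from (Real.sqrt_sq_eq_abs _).symm]
    exact Real.sqrt_le_sqrt (by nlinarith)
  have hρ_ge_d : ∀ τ, d ≤ ρ τ := by
    intro τ; rw [hd]
    exact Real.sqrt_le_sqrt (by nlinarith [sq_nonneg (τ - q)])
  have hρ_le : ∀ τ, ρ τ ≤ |τ - q| + d := by
    intro τ
    have h1 : τ^2 - 2*q*τ + r^2 ≤ (|τ-q| + d)^2 := by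
      nlinarith [sq_abs (τ - q), mul_nonneg (abs_nonneg (τ-q)) hd0]
    calc ρ τ ≤ Real.sqrt ((|τ-q| + d)^2) := Real.sqrt_le_sqrt h1
      _ = |τ-q| + d := Real.sqrt_sq (by positivity)
  have hρ_le3τ : ∀ τ : ℝ, r/2 < τ → ρ τ ≤ 3*τ := by
    intro τ hτ
    have hτ0 : 0 < τ := by linarith
    have h1 : τ^2 - 2*q*τ + r^2 ≤ (3*τ)^2 := by
      nlinarith [mul_nonneg (by linarith [(abs_le.1 hq).1] : (0:ℝ) ≤ r + q) hτ0.le,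
        mul_pos (by linarith : (0:ℝ) < 2*τ - r) (by linarith : (0:ℝ) < 2*τ + r)]
    calc ρ τ ≤ Real.sqrt ((3*τ)^2) := Real.sqrt_le_sqrt h1
      _ = 3*τ := Real.sqrt_sq (by linarith)
  have hτpow : ∀ τ : ℝ, r/2 < τ → (1 + (ρ τ)^c) * τ^(-c) ≤ (r/2)^(-c) + 3^c := by
    intro τ hτ
    have hτ0 : (0:ℝ) < τ := by linarith
    have h1 : τ^(-c) ≤ (r/2)^(-c) := by
      rw [Real.rpow_neg hτ0.le, Real.rpow_neg (by positivity : (0:ℝ) ≤ r/2)]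
      exact inv_anti₀ (Real.rpow_pos_of_pos (by positivity) c)
        (Real.rpow_le_rpow (by positivity) hτ.le hc0.le)
    have h2 : (ρ τ)^c * τ^(-c) ≤ 3^c := by
      have ha : (ρ τ)^c ≤ (3*τ)^c := Real.rpow_le_rpow (hρnn τ) (hρ_le3τ τ hτ) hc0.le
      have h3 : (3*τ)^c = 3^c * τ^c := Real.mul_rpow (by norm_num) hτ0.le
      have h4 : τ^c * τ^(-c) = 1 := by
        rw [← Real.rpow_add hτ0]; simp
      calc (ρ τ)^c * τ^(-c) ≤ (3*τ)^c * τ^(-c) :=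
            mul_le_mul_of_nonneg_right ha (Real.rpow_nonneg hτ0.le _)
        _ = 3^c * (τ^c * τ^(-c)) := by rw [h3]; ring
        _ = 3^c := by rw [h4, mul_one]
    calc (1 + (ρ τ)^c) * τ^(-c) = τ^(-c) + (ρ τ)^c * τ^(-c) := by ring
      _ ≤ (r/2)^(-c) + 3^c := add_le_add h1 h2
  -- far pieces
  have far : ∀ I : Set ℝ, MeasurableSet I → (∀ τ ∈ I, r/2 < τ) → (∀ τ ∈ I, d < |τ - q|) →
      ((∀ τ ∈ I, q < τ) ∨ (∀ τ ∈ I, τ < q)) →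
      IntegrableOn (fun τ => |g (ρ τ)| * τ ^ (-c)) I := by
    intro I hImeas hIsub hIfar hside
    have hρpos : ∀ τ ∈ I, 0 < ρ τ := fun τ hτ =>
      lt_of_le_of_lt hd0 (lt_of_lt_of_le (hIfar τ hτ) (hρ_ge_abs τ))
    have hPpos : ∀ τ ∈ I, 0 < τ^2 - 2*q*τ + r^2 := by
      intro τ hτ
      have h1 := hρpos τ hτ
      nlinarith [hρsq τ]
    have hder : ∀ τ ∈ I, HasDerivWithinAt ρ ((τ - q) / ρ τ) I τ := by
      intro τ hτ
      have hP : HasDerivAt (fun τ : ℝ => τ^2 - 2*q*τ + r^2) (2*τ - 2*q) τ := by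
        have h1 : HasDerivAt (fun τ : ℝ => τ^2) (2*τ) τ := by
          simpa using hasDerivAt_pow 2 τ
        have h2 : HasDerivAt (fun τ : ℝ => 2*q*τ) (2*q) τ := by
          simpa using (hasDerivAt_id τ).const_mul (2*q)
        simpa using (h1.sub h2).add_const (r^2)
      have hsq := (Real.hasDerivAt_sqrt (ne_of_gt (hPpos τ hτ))).comp τ hP
      have heq : HasDerivAt ρ ((τ - q) / ρ τ) τ := by
        refine hsq.congr_deriv ?_
        rw [hρdef]
        have hρp : Real.sqrt (τ^2 - 2*q*τ + r^2) ≠ 0 := ne_of_gt (hρpos τ hτ)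
        field_simp
      exact heq.hasDerivWithinAt
    have hinj : InjOn ρ I := by
      intro a ha b hb hab
      have h1 : a^2 - 2*q*a + r^2 = b^2 - 2*q*b + r^2 := by
        have h2 := congrArg (fun z => z^2) hab
        simpa only [hρsq] using h2
      have h2 : (a - b) * (a + b - 2*q) = 0 := by linear_combination h1
      rcases mul_eq_zero.1 h2 with h | h
      · linarith
      · exfalso
        rcases hside with hs' | hs'
        · have ha' := hs' a ha; have hb' := hs' b hb; linarith
        · have ha' := hs' a ha; have hb' := hs' b hb; linarith
    have himg : ρ '' I ⊆ Ioi 0 := by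
      rintro _ ⟨τ, hτ, rfl⟩; exact hρpos τ hτ
    have key := (integrableOn_image_iff_integrableOn_abs_deriv_smul hImeas hder hinj
      (fun σ => |g σ| / (1 + σ ^ c))).1 (hf₀.mono_set himg)
    set C₁ := (r/2)^(-c) + 3^c with hC₁
    have hC₁0 : 0 ≤ C₁ := by positivity
    have hbound : ∀ τ ∈ I, |g (ρ τ)| * τ^(-c)
        ≤ (2*C₁) * (|(τ-q)/ρ τ| * (|g (ρ τ)| / (1 + (ρ τ)^c))) := by
      intro τ hτ
      have hρp := hρpos τ hτ
      have hd1 : (0:ℝ) < 1 + (ρ τ)^c := by positivity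
      have hg1 : |g (ρ τ)| = (|g (ρ τ)| / (1 + (ρ τ)^c)) * (1 + (ρ τ)^c) := by field_simp
      have hhalf : 1/2 ≤ |(τ - q)/ρ τ| := by
        rw [abs_div, abs_of_pos hρp, le_div_iff₀ hρp]
        have h5 := hρ_le τ; have h6 := hIfar τ hτ; linarith
      have hnn : 0 ≤ |g (ρ τ)| / (1 + (ρ τ)^c) := by positivity
      calc |g (ρ τ)| * τ^(-c)
          = (|g (ρ τ)| / (1+(ρ τ)^c)) * ((1+(ρ τ)^c) * τ^(-c)) := by
            rw [← mul_assoc, ← hg1]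
        _ ≤ (|g (ρ τ)| / (1+(ρ τ)^c)) * C₁ :=
            mul_le_mul_of_nonneg_left (hτpow τ (hIsub τ hτ)) hnn
        _ ≤ (2*C₁) * (|(τ-q)/ρ τ| * (|g (ρ τ)| / (1+(ρ τ)^c))) := by
            nlinarith [mul_nonneg (mul_nonneg hC₁0 hnn) (by linarith : (0:ℝ) ≤ |(τ-q)/ρ τ| - 1/2)]
    have hcontI : AEStronglyMeasurable (fun τ => |g (ρ τ)| * τ^(-c))
        (volume.restrict I) := by
      refine ContinuousOn.aestronglyMeasurable ?_ hImeas
      refine ContinuousOn.mul (ContinuousOn.abs ?_) ?_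
      · refine hgc.comp ((Real.continuous_sqrt.comp (((continuous_pow 2).sub (continuous_const.mul continuous_id)).add continuous_const)).continuousOn) ?_
        intro τ hτ; exact hρpos τ hτ
      · exact ContinuousOn.rpow_const continuousOn_id
          (fun τ hτ => Or.inl (ne_of_gt (by linarith [hIsub τ hτ])))
    refine Integrable.mono' (key.const_mul (2*C₁)) hcontI ?_
    filter_upwards [ae_restrict_mem hImeas] with τ hτ
    rw [Real.norm_eq_abs, abs_of_nonneg (mul_nonneg (abs_nonneg _)
      (Real.rpow_nonneg (by linarith [hIsub τ hτ]) _))]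
    simpa [smul_eq_mul, mul_assoc] using hbound τ hτ
  -- near piece
  have hI1 : IntegrableOn (fun τ => |g (ρ τ)| * τ^(-c))
      (Icc (q-d) (q+d) ∩ Ioi (r/2)) := by
    rcases eq_or_lt_of_le hd0 with hd' | hd'
    · have hsub : Icc (q-d) (q+d) ∩ Ioi (r/2) ⊆ {q} := by
        intro τ hτ
        have h1 := hτ.1.1; have h2 := hτ.1.2
        simp only [mem_singleton_iff]
        rw [← hd'] at h1 h2
        simp only [sub_zero, add_zero] at h1 h2
        linarith
      have hnull : volume (Icc (q-d) (q+d) ∩ Ioi (r/2)) = 0 :=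
        measure_mono_null hsub (measure_singleton q)
      unfold IntegrableOn
      rw [Measure.restrict_eq_zero.2 hnull]
      exact integrable_zero_measure
    · obtain ⟨M, hM⟩ := (isCompact_Icc (a := d) (b := 2*d)).exists_bound_of_continuousOn
        (hgc.mono (fun y hy => lt_of_lt_of_le hd' hy.1))
      have hM0 : 0 ≤ M := le_trans (norm_nonneg (g d)) (hM d ⟨le_refl d, by linarith⟩)
      have hmeas : MeasurableSet (Icc (q-d) (q+d) ∩ Ioi (r/2)) :=
        measurableSet_Icc.inter measurableSet_Ioi
      refine Integrable.mono' (g := fun _ => M * (r/2)^(-c)) ?_ ?_ ?_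
      · exact integrableOn_const (lt_of_le_of_lt
          (measure_mono inter_subset_left) measure_Icc_lt_top).ne
      · refine ContinuousOn.aestronglyMeasurable ?_ hmeas
        refine ContinuousOn.mul (ContinuousOn.abs ?_) ?_
        · refine hgc.comp ((Real.continuous_sqrt.comp (((continuous_pow 2).sub (continuous_const.mul continuous_id)).add continuous_const)).continuousOn) ?_
          intro τ hτ
          exact lt_of_lt_of_le hd' (hρ_ge_d τ)
        · exact ContinuousOn.rpow_const continuousOn_id
            (fun τ hτ => Or.inl (ne_of_gt (lt_trans (by positivity) (mem_Ioi.1 hτ.2))))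
      · filter_upwards [ae_restrict_mem hmeas] with τ hτ
        have hτr2 : r/2 < τ := hτ.2
        have hτ0 : (0:ℝ) < τ := by linarith
        have habs : |τ - q| ≤ d := by
          rw [abs_le]; constructor <;> [linarith [hτ.1.1]; linarith [hτ.1.2]]
        have hρmem : ρ τ ∈ Icc d (2*d) :=
          ⟨hρ_ge_d τ, le_trans (hρ_le τ) (by linarith)⟩
        have h1 : |g (ρ τ)| ≤ M := hM (ρ τ) hρmem
        have h2 : τ^(-c) ≤ (r/2)^(-c) := by
          rw [Real.rpow_neg hτ0.le, Real.rpow_neg (by positivity : (0:ℝ) ≤ r/2)]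
          exact inv_anti₀ (Real.rpow_pos_of_pos (by positivity) c)
            (Real.rpow_le_rpow (by positivity) hτr2.le hc0.le)
        rw [Real.norm_eq_abs, abs_of_nonneg (mul_nonneg (abs_nonneg _)
          (Real.rpow_nonneg hτ0.le _))]
        exact mul_le_mul h1 h2 (Real.rpow_nonneg hτ0.le _) hM0
  -- assemble
  have hI2 : IntegrableOn (fun τ => |g (ρ τ)| * τ^(-c)) (Ioo (r/2) (q-d)) := by
    refine far _ measurableSet_Ioo (fun τ hτ => hτ.1) (fun τ hτ => ?_) (Or.inr (fun τ hτ => ?_))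
    · have : d < q - τ := by linarith [hτ.2]
      exact lt_of_lt_of_le this (by rw [abs_sub_comm]; exact le_abs_self _)
    · linarith [hτ.2, hd0]
  have hI3 : IntegrableOn (fun τ => |g (ρ τ)| * τ^(-c)) (Ioi (max (r/2) (q+d))) := by
    refine far _ measurableSet_Ioi (fun τ hτ => lt_of_le_of_lt (le_max_left _ _) hτ)
      (fun τ hτ => ?_) (Or.inl (fun τ hτ => ?_))
    · have h1 : q + d < τ := lt_of_le_of_lt (le_max_right _ _) hτ
      exact lt_of_lt_of_le (by linarith) (le_abs_self _)
    · have h1 : q + d < τ := lt_of_le_of_lt (le_max_right _ _) hτ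
      linarith
  have hcover : Ioi (r/2) ⊆ (Ioo (r/2) (q-d) ∪ (Icc (q-d) (q+d) ∩ Ioi (r/2)))
      ∪ Ioi (max (r/2) (q+d)) := by
    intro τ hτ
    simp only [mem_Ioi] at hτ
    by_cases h1 : τ ≤ q + d
    · by_cases h2 : τ < q - d
      · exact Or.inl (Or.inl ⟨hτ, h2⟩)
      · exact Or.inl (Or.inr ⟨⟨not_lt.1 h2, h1⟩, hτ⟩)
    · exact Or.inr (by simp only [mem_Ioi, max_lt_iff]; exact ⟨hτ, not_le.1 h1⟩)
  exact ((hI2.union hI1).union hI3).mono_set hcover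



lemma near_integrable (hg : ContDiffOn ℝ 2 g (Ioi 0)) (hs : s ∈ Ioo (1/2:ℝ) 1)
    {r p : ℝ} (hr : 0 < r) (hp : |p| ≤ r) :
    IntegrableOn (fun τ => Kb g r p τ * τ ^ (-(1+2*s))) (Ioc 0 (r/2)) := by
  set J : Set ℝ := Icc (r^2/4) (9*r^2/4) with hJ
  have hJsub : J ⊆ Ioi 0 := fun y hy => lt_of_lt_of_le (by positivity) hy.1
  have hJr2 : r^2 ∈ J := ⟨by nlinarith, by nlinarith⟩
  have harg : ∀ τ : ℝ, 0 < τ → τ ≤ r/2 → ∀ t : ℝ, |t| ≤ r →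
      r^2 + τ^2 + 2*τ*t ∈ J := by
    intro τ h1 h2 t ht
    obtain ⟨ht1, ht2⟩ := abs_le.1 ht
    constructor
    · nlinarith [sq_nonneg (r - τ), mul_nonneg h1.le (by linarith : (0:ℝ) ≤ t + r)]
    · nlinarith [mul_nonneg h1.le (by linarith : (0:ℝ) ≤ r - t)]
  obtain ⟨M₂, hM₂⟩ := isCompact_Icc.exists_bound_of_continuousOn
    ((gtilde_deriv2_contOn hg).mono hJsub)
  have hM₂0 : 0 ≤ M₂ := le_trans (norm_nonneg _) (hM₂ _ hJr2)
  have hstep1 : ∀ z ∈ J, ‖deriv (gtilde g) z - deriv (gtilde g) (r^2)‖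
      ≤ M₂ * ‖z - r^2‖ := by
    intro z hz
    refine Convex.norm_image_sub_le_of_norm_hasDerivWithin_le
      (f := deriv (gtilde g)) (f' := deriv (deriv (gtilde g))) (s := J)
      (fun y hy => (gtilde_deriv_hasDerivAt hg (hJsub hy)).hasDerivWithinAt)
      (fun y hy => hM₂ y hy) (convex_Icc _ _) hJr2 hz
  have htaylor : ∀ y ∈ J,
      |gtilde g y - gtilde g (r^2) - deriv (gtilde g) (r^2) * (y - r^2)|
        ≤ M₂ * (y - r^2)^2 := by
    intro y hy
    have hsub2 : uIcc (r^2) y ⊆ J := (convex_Icc _ _).ordConnected.uIcc_subset hJr2 hy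
    have hder : ∀ z ∈ uIcc (r^2) y, HasDerivWithinAt
        (fun z => gtilde g z - deriv (gtilde g) (r^2) * z)
        (deriv (gtilde g) z - deriv (gtilde g) (r^2)) (uIcc (r^2) y) z := by
      intro z hz
      have h1 := (gtilde_hasDerivAt hg (hJsub (hsub2 hz))).sub
        ((hasDerivAt_id z).const_mul (deriv (gtilde g) (r^2)))
      exact (h1.congr_deriv (by ring)).hasDerivWithinAt
    have hbd : ∀ z ∈ uIcc (r^2) y,
        ‖deriv (gtilde g) z - deriv (gtilde g) (r^2)‖ ≤ M₂ * |y - r^2| := by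
      intro z hz
      refine le_trans (hstep1 z (hsub2 hz)) ?_
      have h2 : ‖z - r^2‖ ≤ |y - r^2| := by
        rw [Real.norm_eq_abs]
        rcases mem_uIcc.1 hz with h | h
        · rw [abs_of_nonneg (by linarith [h.1]), abs_of_nonneg (by linarith [h.1, h.2])]
          linarith [h.2]
        · rw [abs_of_nonpos (by linarith [h.2]), abs_of_nonpos (by linarith [h.1, h.2])]
          linarith [h.1]
      exact mul_le_mul_of_nonneg_left h2 hM₂0
    have hres := Convex.norm_image_sub_le_of_norm_hasDerivWithin_le
      (f := fun z => gtilde g z - deriv (gtilde g) (r^2) * z)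
      (f' := fun z => deriv (gtilde g) z - deriv (gtilde g) (r^2))
      (s := uIcc (r^2) y) hder hbd (convex_uIcc _ _) left_mem_uIcc right_mem_uIcc
    rw [Real.norm_eq_abs, Real.norm_eq_abs] at hres
    calc |gtilde g y - gtilde g (r^2) - deriv (gtilde g) (r^2) * (y - r^2)|
        = |(gtilde g y - deriv (gtilde g) (r^2) * y)
            - (gtilde g (r^2) - deriv (gtilde g) (r^2) * r^2)| := by ring_nf
      _ ≤ M₂ * |y - r^2| * |y - r^2| := hres
      _ = M₂ * (y - r^2)^2 := by rw [mul_assoc, ← abs_mul, ← sq, abs_of_nonneg (sq_nonneg _)]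
  set M₁ := |deriv (gtilde g) (r^2)| with hM₁
  set C₀ := 18*M₂*r^2 + 2*M₁ with hC₀
  have hC₀0 : 0 ≤ C₀ := by positivity
  obtain ⟨hp1, hp2⟩ := abs_le.1 hp
  have hKbb : ∀ τ : ℝ, 0 < τ → τ ≤ r/2 → |Kb g r p τ| ≤ C₀ * τ^2 := by
    intro τ h1 h2
    have hyp := htaylor _ (harg τ h1 h2 p hp)
    have hym := htaylor _ (harg τ h1 h2 (-p) (by rwa [abs_neg]))
    rw [show r^2 + τ^2 + 2*τ*(-p) = r^2 + τ^2 - 2*τ*p by ring] at hym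
    rw [show r^2 + τ^2 + 2*τ*p - r^2 = τ^2 + 2*τ*p by ring] at hyp
    rw [show r^2 + τ^2 - 2*τ*p - r^2 = τ^2 - 2*τ*p by ring] at hym
    have hsq1 : (τ^2 + 2*τ*p)^2 ≤ 9*r^2*τ^2 := by
      nlinarith [mul_nonneg (mul_nonneg (sq_nonneg τ)
        (by linarith : (0:ℝ) ≤ 3*r - τ - 2*p)) (by linarith : (0:ℝ) ≤ 3*r + τ + 2*p)]
    have hsq2 : (τ^2 - 2*τ*p)^2 ≤ 9*r^2*τ^2 := by
      nlinarith [mul_nonneg (mul_nonneg (sq_nonneg τ)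
        (by linarith : (0:ℝ) ≤ 3*r - τ + 2*p)) (by linarith : (0:ℝ) ≤ 3*r + τ - 2*p)]
    have hid : Kb g r p τ
        = (gtilde g (r^2+τ^2+2*τ*p) - gtilde g (r^2)
            - deriv (gtilde g) (r^2) * (τ^2+2*τ*p))
          + (gtilde g (r^2+τ^2-2*τ*p) - gtilde g (r^2)
            - deriv (gtilde g) (r^2) * (τ^2-2*τ*p))
          + deriv (gtilde g) (r^2) * (2*τ^2) := by
      unfold Kb; ring
    rw [hid]
    set a1 := gtilde g (r^2+τ^2+2*τ*p) - gtilde g (r^2)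
      - deriv (gtilde g) (r^2) * (τ^2+2*τ*p) with ha1
    set a2 := gtilde g (r^2+τ^2-2*τ*p) - gtilde g (r^2)
      - deriv (gtilde g) (r^2) * (τ^2-2*τ*p) with ha2
    set a3 := deriv (gtilde g) (r^2) * (2*τ^2) with ha3
    have habs3 : |a3| = M₁ * (2*τ^2) := by
      rw [ha3, abs_mul, hM₁, abs_of_nonneg (by positivity : (0:ℝ) ≤ 2*τ^2)]
    have hb1 : |a1 + a2 + a3| ≤ |a1| + |a2| + |a3| :=
      le_trans (abs_add_le _ _) (add_le_add_left (abs_add_le _ _) _)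
    have hfin : |a1| + |a2| + |a3| ≤ C₀ * τ^2 := by
      rw [habs3, hC₀]
      have k1 : |a1| ≤ M₂ * (τ^2+2*τ*p)^2 := hyp
      have k2 : |a2| ≤ M₂ * (τ^2-2*τ*p)^2 := hym
      nlinarith [mul_le_mul_of_nonneg_left hsq1 hM₂0,
        mul_le_mul_of_nonneg_left hsq2 hM₂0]
    exact le_trans hb1 hfin
  have hmaj : IntegrableOn (fun τ : ℝ => C₀ * τ^(1-2*s)) (Ioc 0 (r/2)) := by
    have h1 : IntegrableOn (fun τ : ℝ => τ^(1-2*s)) (Ioo 0 (r/2)) :=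
      (intervalIntegral.integrableOn_Ioo_rpow_iff (by positivity)).2 (by linarith [hs.2])
    have h2 : IntegrableOn (fun τ : ℝ => C₀ * τ^(1-2*s)) (Ioo 0 (r/2)) := h1.const_mul C₀
    exact h2.congr_set_ae Ioo_ae_eq_Ioc.symm
  have haesm : AEStronglyMeasurable (fun τ => Kb g r p τ * τ^(-(1+2*s)))
      (volume.restrict (Ioc 0 (r/2))) := by
    refine ContinuousOn.aestronglyMeasurable ?_ measurableSet_Ioc
    refine ContinuousOn.mul ?_ (ContinuousOn.rpow_const continuousOn_id
      (fun τ hτ => Or.inl (ne_of_gt hτ.1)))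
    unfold Kb
    refine ContinuousOn.sub (ContinuousOn.add ?_ ?_) continuousOn_const
    · refine (gtilde_contOn hg).comp (by fun_prop) ?_
      intro τ hτ; exact hJsub (harg τ hτ.1 hτ.2 p hp)
    · refine (gtilde_contOn hg).comp (by fun_prop) ?_
      intro τ hτ
      have h1 := hJsub (harg τ hτ.1 hτ.2 (-p) (by rwa [abs_neg]))
      rwa [show r^2 + τ^2 + 2*τ*(-p) = r^2 + τ^2 - 2*τ*p by ring] at h1
  refine Integrable.mono' hmaj haesm ?_
  filter_upwards [ae_restrict_mem measurableSet_Ioc] with τ hτ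
  have h1 := hτ.1
  have h2 := hτ.2
  rw [Real.norm_eq_abs, abs_mul, abs_of_nonneg (Real.rpow_nonneg h1.le _)]
  have hpow : τ^2 * τ^(-(1+2*s)) = τ^(1-2*s) := by
    rw [← Real.rpow_natCast τ 2, ← Real.rpow_add h1]
    congr 1
    push_cast
    ring
  calc |Kb g r p τ| * τ^(-(1+2*s)) ≤ (C₀ * τ^2) * τ^(-(1+2*s)) :=
        mul_le_mul_of_nonneg_right (hKbb τ h1 h2) (Real.rpow_nonneg h1.le _)
    _ = C₀ * τ^(1-2*s) := by rw [mul_assoc, hpow]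

lemma integrable_Fn (hg : ContDiffOn ℝ 2 g (Ioi 0))
    (hL : IntegrableOn (fun σ => g σ / (1 + σ ^ (1+2*s))) (Ioi 0))
    (hs : s ∈ Ioo (1/2:ℝ) 1) {r p : ℝ} (hr : 0 < r) (hp : |p| ≤ r) :
    IntegrableOn (fun τ => Kb g r p τ * τ ^ (-(1+2*s))) (Ioi 0) := by
  have hgc : ContinuousOn g (Ioi 0) := hg.continuousOn
  have htail : IntegrableOn (fun τ => Kb g r p τ * τ ^ (-(1+2*s))) (Ioi (r/2)) := by
    have t1 := tail_integrable hgc hL hs hr (q := p) hp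
    have t2 := tail_integrable hgc hL hs hr (q := -p) (by rwa [abs_neg])
    have t3 : IntegrableOn (fun τ : ℝ => 2*|gtilde g (r^2)| * τ^(-(1+2*s)))
        (Ioi (r/2)) :=
      (integrableOn_Ioi_rpow_of_lt (by linarith [hs.1]) (by positivity)).const_mul _
    have haesm : AEStronglyMeasurable (fun τ => Kb g r p τ * τ^(-(1+2*s)))
        (volume.restrict (Ioi (r/2))) := by
      have hSm : MeasurableSet (Ioi (r/2) \ {r}) :=
        measurableSet_Ioi.diff (measurableSet_singleton r)
      have hpos : ∀ τ ∈ Ioi (r/2) \ {r}, ∀ t : ℝ, |t| ≤ r →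
          0 < r^2 + τ^2 + 2*τ*t := by
        intro τ hτ t ht
        obtain ⟨ht1, ht2⟩ := abs_le.1 ht
        have hτ0 : 0 < τ := lt_trans (by positivity) hτ.1
        have hτr : τ ≠ r := by simpa using hτ.2
        have : (0:ℝ) < (r - τ)^2 := pow_two_pos_of_ne_zero (sub_ne_zero.2 (fun h => hτr h.symm))
        nlinarith [mul_nonneg hτ0.le (by linarith : (0:ℝ) ≤ t + r)]
      have hcont : ContinuousOn (fun τ => Kb g r p τ * τ^(-(1+2*s)))
          (Ioi (r/2) \ {r}) := by
        refine ContinuousOn.mul ?_ (ContinuousOn.rpow_const continuousOn_id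
          (fun τ hτ => Or.inl (ne_of_gt (lt_trans (by positivity) hτ.1))))
        unfold Kb
        refine ContinuousOn.sub (ContinuousOn.add ?_ ?_) continuousOn_const
        · refine (gtilde_contOn hg).comp (by fun_prop) ?_
          intro τ hτ; exact hpos τ hτ p hp
        · refine (gtilde_contOn hg).comp (by fun_prop) ?_
          intro τ hτ
          have h1 := hpos τ hτ (-p) (by rwa [abs_neg])
          rwa [show r^2 + τ^2 + 2*τ*(-p) = r^2 + τ^2 - 2*τ*p by ring] at h1
      have hae : (Ioi (r/2) \ {r} : Set ℝ) =ᵐ[volume] Ioi (r/2) := by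
        refine MeasureTheory.ae_eq_set.2 ⟨?_, ?_⟩
        · rw [show (Ioi (r/2) \ {r}) \ Ioi (r/2) = (∅ : Set ℝ) by simp [diff_subset]]
          simp
        · exact measure_mono_null (fun τ hτ => by
            simp only [mem_diff, mem_singleton_iff, not_and, not_not] at hτ ⊢
            exact hτ.2 hτ.1) (measure_singleton r)
      rw [← Measure.restrict_congr_set hae]
      exact hcont.aestronglyMeasurable hSm
    refine Integrable.mono' ((t1.add t2).add t3) haesm ?_
    filter_upwards [ae_restrict_mem measurableSet_Ioi] with τ hτ
    have hτ0 : 0 < τ := lt_trans (by positivity) hτ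
    have hrnn : 0 ≤ τ^(-(1+2*s)) := Real.rpow_nonneg hτ0.le _
    rw [Real.norm_eq_abs, abs_mul, abs_of_nonneg hrnn]
    have e1 : gtilde g (r^2+τ^2+2*τ*p) = g (Real.sqrt (τ^2 - 2*(-p)*τ + r^2)) := by
      unfold gtilde
      congr 1
      ring
    have e2 : gtilde g (r^2+τ^2-2*τ*p) = g (Real.sqrt (τ^2 - 2*p*τ + r^2)) := by
      unfold gtilde
      congr 1
      ring
    have hKb_le : |Kb g r p τ| ≤ |g (Real.sqrt (τ^2 - 2*p*τ + r^2))|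
        + |g (Real.sqrt (τ^2 - 2*(-p)*τ + r^2))| + 2*|gtilde g (r^2)| := by
      unfold Kb
      rw [e1, e2]
      calc |g (Real.sqrt (τ^2 - 2*(-p)*τ + r^2)) + g (Real.sqrt (τ^2 - 2*p*τ + r^2))
          - 2 * gtilde g (r^2)|
          ≤ |g (Real.sqrt (τ^2 - 2*(-p)*τ + r^2)) + g (Real.sqrt (τ^2 - 2*p*τ + r^2))|
            + |2 * gtilde g (r^2)| := abs_sub _ _
        _ ≤ _ := by
            rw [abs_mul]
            have := abs_add_le (g (Real.sqrt (τ^2 - 2*(-p)*τ + r^2)))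
              (g (Real.sqrt (τ^2 - 2*p*τ + r^2)))
            simp only [abs_two]
            linarith
    calc |Kb g r p τ| * τ^(-(1+2*s))
        ≤ (|g (Real.sqrt (τ^2 - 2*p*τ + r^2))|
          + |g (Real.sqrt (τ^2 - 2*(-p)*τ + r^2))| + 2*|gtilde g (r^2)|) * τ^(-(1+2*s)) :=
          mul_le_mul_of_nonneg_right hKb_le hrnn
      _ = |g (Real.sqrt (τ^2 - 2*p*τ + r^2))| * τ^(-(1+2*s))
          + |g (Real.sqrt (τ^2 - 2*(-p)*τ + r^2))| * τ^(-(1+2*s))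
          + 2*|gtilde g (r^2)| * τ^(-(1+2*s)) := by ring
  have hnear := near_integrable hg hs hr hp (g := g)
  rw [← Ioc_union_Ioi_eq_Ioi (le_of_lt (half_pos hr))]
  exact hnear.union htail


lemma Iop_rep {N : ℕ} (s Cs : ℝ) (g : ℝ → ℝ) (u : E N → ℝ) (hu : ∀ y, u y = g ‖y‖)
    (x ξ : E N) (hξ : ‖ξ‖ = 1) :
    Iop N s Cs u ξ x
      = Cs * ∫ τ in Ioi (0:ℝ), Kb g ‖x‖ (inner ℝ x ξ) τ * τ ^ (-(1+2*s)) := by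
  unfold Iop
  congr 1
  refine integral_congr_ae (Filter.Eventually.of_forall fun τ => ?_)
  have e1 : ‖x + τ • ξ‖^2 = ‖x‖^2 + τ^2 + 2*τ*(inner ℝ x ξ : ℝ) := by
    rw [norm_add_sq_real, real_inner_smul_right, norm_smul, Real.norm_eq_abs, hξ,
      mul_one, sq_abs]
    ring
  have e2 : ‖x - τ • ξ‖^2 = ‖x‖^2 + τ^2 - 2*τ*(inner ℝ x ξ : ℝ) := by
    rw [norm_sub_sq_real, real_inner_smul_right, norm_smul, Real.norm_eq_abs, hξ,
      mul_one, sq_abs]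
    ring
  have h1 : u (x + τ • ξ) = gtilde g (‖x‖^2 + τ^2 + 2*τ*(inner ℝ x ξ : ℝ)) := by
    rw [hu]; unfold gtilde; rw [← e1, Real.sqrt_sq (norm_nonneg _)]
  have h2 : u (x - τ • ξ) = gtilde g (‖x‖^2 + τ^2 - 2*τ*(inner ℝ x ξ : ℝ)) := by
    rw [hu]; unfold gtilde; rw [← e2, Real.sqrt_sq (norm_nonneg _)]
  have h3 : u x = gtilde g (‖x‖^2) := by
    rw [hu]; unfold gtilde; rw [Real.sqrt_sq (norm_nonneg _)]
  simp only [Kb, h1, h2, h3]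

lemma exists_basis_first {N : ℕ} (hN : 0 < N) (v : E N) (hv : ‖v‖ = 1) :
    ∃ b : OrthonormalBasis (Fin N) ℝ (E N), b ⟨0, hN⟩ = v := by
  have hcard : Module.finrank ℝ (E N) = Fintype.card (Fin N) := by
    simp [finrank_euclideanSpace_fin]
  have horth : Orthonormal ℝ (({⟨0, hN⟩} : Set (Fin N)).restrict
      (fun _ : Fin N => v)) := by
    constructor
    · intro i; exact hv
    · intro i j hij
      exfalso
      apply hij
      have hi := i.2
      have hj := j.2
      simp only [mem_singleton_iff] at hi hj
      exact Subtype.ext (hi.trans hj.symm)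
  obtain ⟨b, hb⟩ := horth.exists_orthonormalBasis_extension_of_card_eq hcard
  exact ⟨b, hb _ rfl⟩

lemma parseval {N : ℕ} (ξ : Fin N → E N) (hξ : Orthonormal ℝ ξ) (x : E N) :
    ∑ i, (inner ℝ x (ξ i) : ℝ)^2 = ‖x‖^2 := by
  rcases Nat.eq_zero_or_pos N with h0 | hN
  · subst h0
    have : x = 0 := Subsingleton.elim x 0
    simp [this]
  · have : Nonempty (Fin N) := ⟨⟨0, hN⟩⟩
    have hcard : Fintype.card (Fin N) = Module.finrank ℝ (E N) := by
      simp [finrank_euclideanSpace_fin]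
    let bb := basisOfOrthonormalOfCardEqFinrank hξ hcard
    have hbb : ⇑bb = ξ := coe_basisOfOrthonormalOfCardEqFinrank hξ hcard
    let b : OrthonormalBasis (Fin N) ℝ (E N) := bb.toOrthonormalBasis (by rwa [hbb])
    have hb : ⇑b = ξ := by
      rw [show ⇑b = ⇑bb from Module.Basis.coe_toOrthonormalBasis _ _, hbb]
    have key := b.sum_inner_mul_inner x x
    rw [← real_inner_self_eq_norm_sq]
    rw [← key]
    refine Finset.sum_congr rfl fun i _ => ?_
    rw [hb, real_inner_comm (ξ i) x, sq]

lemma exists_equiangular {N : ℕ} (hN : 0 < N) (v : E N) (hv : ‖v‖ = 1) :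
    ∃ η : Fin N → E N, Orthonormal ℝ η ∧
      ∀ i, (inner ℝ v (η i) : ℝ) = 1 / Real.sqrt N := by
  obtain ⟨b, hb0⟩ := exists_basis_first hN v hv
  have hNR : (0:ℝ) < N := by exact_mod_cast hN
  have hsN : Real.sqrt N ≠ 0 := ne_of_gt (Real.sqrt_pos.2 hNR)
  set w : E N := WithLp.toLp 2 (fun _ => 1 / Real.sqrt N) with hw
  have hwnorm : ‖w‖ = 1 := by
    rw [EuclideanSpace.norm_eq]
    have : ∀ i : Fin N, ‖w i‖^2 = 1/N := by
      intro i
      rw [hw]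
      simp only [Real.norm_eq_abs, PiLp.toLp_apply]
      rw [sq_abs, div_pow, one_pow, Real.sq_sqrt (le_of_lt hNR)]
    rw [Finset.sum_congr rfl fun i _ => this i, Finset.sum_const, Finset.card_univ,
      Fintype.card_fin, nsmul_eq_mul, mul_one_div, div_self (ne_of_gt hNR), Real.sqrt_one]
  obtain ⟨c, hc0⟩ := exists_basis_first hN w hwnorm
  set η : Fin N → E N := fun i => ∑ j, (c j i) • b j with hη
  have hinner : ∀ i k : Fin N, (inner ℝ (η i) (η k) : ℝ) = ∑ j, (c j i) * (c j k) := by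
    intro i k
    rw [hη]
    simp only [sum_inner, inner_sum, real_inner_smul_left, real_inner_smul_right]
    refine Finset.sum_congr rfl (fun j _ => ?_)
    rw [Finset.sum_eq_single j]
    · rw [orthonormal_iff_ite.1 b.orthonormal j j]
      simp [mul_comm]
    · intro l _ hlj
      rw [orthonormal_iff_ite.1 b.orthonormal l j]
      simp [hlj]
    · intro h; exact absurd (Finset.mem_univ j) h
  have hcsum : ∀ i k : Fin N, (∑ j, (c j i) * (c j k)) = if i = k then (1:ℝ) else 0 := by
    intro i k
    have key := c.sum_inner_mul_inner (EuclideanSpace.single i (1:ℝ))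
      (EuclideanSpace.single k (1:ℝ))
    have h1 : ∀ j, (inner ℝ (EuclideanSpace.single i (1:ℝ)) (c j) : ℝ) = c j i := by
      intro j
      rw [EuclideanSpace.inner_single_left]
      simp
    have h2 : ∀ j, (inner ℝ (c j) (EuclideanSpace.single k (1:ℝ)) : ℝ) = c j k := by
      intro j
      rw [EuclideanSpace.inner_single_right]
      simp
    rw [Finset.sum_congr rfl (fun j _ => by rw [h1 j, h2 j])] at key
    rw [key, EuclideanSpace.inner_single_left]
    simp [EuclideanSpace.single_apply]
  have hηon : Orthonormal ℝ η := by
    rw [orthonormal_iff_ite]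
    intro i j
    rw [hinner i j, hcsum i j]
  refine ⟨η, hηon, fun i => ?_⟩
  have : (inner ℝ v (η i) : ℝ) = ∑ j, (c j i) * (inner ℝ v (b j) : ℝ) := by
    rw [hη]
    simp only [inner_sum, real_inner_smul_right]
  rw [this]
  rw [Finset.sum_eq_single (⟨0, hN⟩ : Fin N)]
  · rw [← hb0, real_inner_self_eq_norm_sq, hb0, hv, hc0, hw]
    norm_num
  · intro l _ hl
    rw [← hb0, orthonormal_iff_ite.1 b.orthonormal]
    simp [hl.symm]
  · intro h; exact absurd (Finset.mem_univ _) h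


end Stmt4

open Stmt4 in
theorem stmt_4 (N : ℕ) (hN : 1 ≤ N)
    (s Cs : ℝ) (hs : s ∈ Ioo (1/2 : ℝ) 1) (hCs : 0 < Cs)
    (g : ℝ → ℝ) (hg1 : HypH1 s g) (hg2 : HypH2 s g)
    (u : E N → ℝ) (hu : ∀ x, u x = g ‖x‖)
    (x : E N) (hx : x ≠ 0) :
    (∀ k : ℕ, 1 ≤ k → k < N → ∀ xp : E N, ‖xp‖ = 1 → (inner ℝ x xp : ℝ) = 0 →
      IkMinus N k s Cs u x = (k : ℝ) * Iop N s Cs u xp x) ∧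
    (∀ ξstar : E N, ‖ξstar‖ = 1 →
      (inner ℝ (‖x‖⁻¹ • x) ξstar : ℝ) = 1 / Real.sqrt N →
      IkMinus N N s Cs u x = (N : ℝ) * Iop N s Cs u ξstar x) := by
  obtain ⟨hgC2, hgL1, hgmono, -⟩ := hg1
  obtain ⟨-, -, -, hgconv⟩ := hg2
  have hN0 : 0 < N := hN
  set r := ‖x‖ with hrdef
  have hr : 0 < r := by rw [hrdef]; exact norm_pos_iff.2 hx
  set val : ℝ → ℝ := fun p => Cs * ∫ τ in Ioi (0:ℝ), Kb g r p τ * τ ^ (-(1+2*s))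
    with hval
  have hrep : ∀ ξ : E N, ‖ξ‖ = 1 → Iop N s Cs u ξ x = val (inner ℝ x ξ) :=
    fun ξ hξ => Iop_rep s Cs g u hu x ξ hξ
  have hL : IntegrableOn (fun σ => g σ / (1 + σ ^ (1+2*s))) (Ioi (0:ℝ)) := hgL1
  have hint : ∀ p : ℝ, |p| ≤ r →
      IntegrableOn (fun τ => Kb g r p τ * τ ^ (-(1+2*s))) (Ioi (0:ℝ)) :=
    fun p hp => integrable_Fn hgC2 hL hs hr hp
  have haer : ∀ᵐ τ ∂(volume.restrict (Ioi (0:ℝ))), τ ≠ r := by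
    refine ae_restrict_of_ae ?_
    rw [ae_iff]
    simp only [ne_eq, not_not]
    rw [Set.setOf_eq_eq_singleton]
    exact measure_singleton r
  have hmono_val : ∀ p : ℝ, |p| ≤ r → val 0 ≤ val p := by
    intro p hp
    refine mul_le_mul_of_nonneg_left ?_ hCs.le
    refine integral_mono_ae (hint 0 (by simpa using hr.le)) (hint p hp) ?_
    filter_upwards [ae_restrict_mem measurableSet_Ioi, haer] with τ hτ hτr
    exact mul_le_mul_of_nonneg_right (mono_pt hgC2 hgmono hr hτ hτr hp)
      (Real.rpow_nonneg (le_of_lt hτ) _)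
  have hpabs : ∀ (k : ℕ) (ξ : Fin k → E N), Orthonormal ℝ ξ → ∀ i,
      |(inner ℝ x (ξ i) : ℝ)| ≤ r := by
    intro k ξ hξ i
    calc |(inner ℝ x (ξ i) : ℝ)| ≤ ‖x‖ * ‖ξ i‖ := abs_real_inner_le_norm x (ξ i)
      _ = r := by rw [hξ.1 i, mul_one, hrdef]
  have hlow0 : ∀ (k : ℕ) (ξ : Fin k → E N), Orthonormal ℝ ξ →
      (k:ℝ) * val 0 ≤ ∑ i, Iop N s Cs u (ξ i) x := by
    intro k ξ hξ
    calc (k:ℝ) * val 0 = ∑ _i : Fin k, val 0 := by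
          rw [Finset.sum_const, Finset.card_univ, Fintype.card_fin, nsmul_eq_mul]
      _ ≤ ∑ i, val (inner ℝ x (ξ i)) :=
          Finset.sum_le_sum (fun i _ => hmono_val _ (hpabs k ξ hξ i))
      _ = ∑ i, Iop N s Cs u (ξ i) x :=
          Finset.sum_congr rfl (fun i _ => (hrep _ (hξ.1 i)).symm)
  have hvnorm : ‖(r⁻¹ • x : E N)‖ = 1 := by
    rw [norm_smul, Real.norm_eq_abs, abs_of_pos (inv_pos.2 hr), ← hrdef,
      inv_mul_cancel₀ (ne_of_gt hr)]
  have hxv : x = r • (r⁻¹ • x) := by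
    rw [smul_smul, mul_inv_cancel₀ (ne_of_gt hr), one_smul]
  constructor
  · -- part (a)
    intro k hk1 hkN xp hxp hxpo
    have hIxp : Iop N s Cs u xp x = val 0 := by rw [hrep xp hxp, hxpo]
    obtain ⟨b, hb0⟩ := exists_basis_first hN0 _ hvnorm
    set f : Fin k → Fin N := fun i => ⟨i.1+1, by omega⟩ with hf
    have hfinj : Function.Injective f := by
      intro i j hij
      have h1 := congrArg Fin.val hij
      simp only [hf] at h1
      exact Fin.ext (by omega)
    have hζon : Orthonormal ℝ (⇑b ∘ f) := b.orthonormal.comp f hfinj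
    have hζinner : ∀ i : Fin k, (inner ℝ x ((⇑b ∘ f) i) : ℝ) = 0 := by
      intro i
      have h2 : (inner ℝ x (b (f i)) : ℝ) = r * (inner ℝ (r⁻¹ • x) (b (f i)) : ℝ) := by
        conv_lhs => rw [hxv]
        rw [real_inner_smul_left]
      have h3 : (⟨0, hN0⟩ : Fin N) ≠ f i := by
        simp only [hf, ne_eq, Fin.ext_iff]
        omega
      show (inner ℝ x (b (f i)) : ℝ) = 0
      rw [h2, ← hb0, orthonormal_iff_ite.1 b.orthonormal]
      simp [h3]
    have hsum : ∑ i, Iop N s Cs u ((⇑b ∘ f) i) x = (k:ℝ) * val 0 := by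
      rw [Finset.sum_congr rfl (fun i _ => by rw [hrep _ (hζon.1 i), hζinner i])]
      rw [Finset.sum_const, Finset.card_univ, Fintype.card_fin, nsmul_eq_mul]
    have hnonempty : Nonempty {ξ : Fin k → E N // Orthonormal ℝ ξ} := ⟨⟨_, hζon⟩⟩
    have hbdd : BddBelow (Set.range fun ξ : {ξ : Fin k → E N // Orthonormal ℝ ξ} =>
        ∑ i, Iop N s Cs u (ξ.1 i) x) := by
      refine ⟨(k:ℝ) * val 0, ?_⟩
      rintro y ⟨ξ, rfl⟩
      exact hlow0 k ξ.1 ξ.2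
    rw [show (k:ℝ) * Iop N s Cs u xp x = (k:ℝ) * val 0 by rw [hIxp]]
    unfold IkMinus
    apply le_antisymm
    · exact (ciInf_le hbdd ⟨_, hζon⟩).trans_eq hsum
    · exact le_ciInf (fun ξ => hlow0 k ξ.1 ξ.2)
  · -- part (b)
    intro ξs hξs hξsinner
    have hNR : (0:ℝ) < N := by exact_mod_cast hN0
    have hsN1 : 1 ≤ Real.sqrt N := by
      rw [show (1:ℝ) = Real.sqrt 1 by rw [Real.sqrt_one]]
      exact Real.sqrt_le_sqrt (by exact_mod_cast hN0)
    set q : ℝ := r * (1 / Real.sqrt N) with hqdef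
    have hq2 : q^2 = r^2 / N := by
      rw [hqdef, mul_pow, div_pow, one_pow, Real.sq_sqrt hNR.le]
      ring
    have hqabs : |q| ≤ r := by
      have hq0 : 0 ≤ q := by rw [hqdef]; positivity
      rw [abs_of_nonneg hq0, hqdef]
      calc r * (1 / Real.sqrt N) ≤ r * 1 :=
            mul_le_mul_of_nonneg_left (by rw [div_le_one (by linarith)]; exact hsN1) hr.le
        _ = r := mul_one r
    have hq : (inner ℝ x ξs : ℝ) = q := by
      have h2 : r⁻¹ * (inner ℝ x ξs : ℝ) = 1 / Real.sqrt N := by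
        rw [← real_inner_smul_left]
        exact hξsinner
      have h3 := congrArg (fun z => r * z) h2
      rw [← mul_assoc, mul_inv_cancel₀ (ne_of_gt hr), one_mul] at h3
      rw [h3, hqdef]
    have hIxs : Iop N s Cs u ξs x = val q := by rw [hrep ξs hξs, hq]
    have hlowN : ∀ ξ : Fin N → E N, Orthonormal ℝ ξ →
        (N:ℝ) * val q ≤ ∑ i, Iop N s Cs u (ξ i) x := by
      intro ξ hξ
      have hpars : ∑ i, (inner ℝ x (ξ i) : ℝ)^2 = r^2 := parseval ξ hξ x
      have hintp : ∀ i : Fin N, IntegrableOn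
          (fun τ => Kb g r (inner ℝ x (ξ i)) τ * τ^(-(1+2*s))) (Ioi (0:ℝ)) :=
        fun i => hint _ (hpabs N ξ hξ i)
      have hintq := hint q hqabs
      have hsum_int : IntegrableOn
          (fun τ => ∑ i, Kb g r (inner ℝ x (ξ i)) τ * τ^(-(1+2*s))) (Ioi (0:ℝ)) :=
        integrable_finset_sum _ (fun i _ => hintp i)
      have hNq : IntegrableOn (fun τ => (N:ℝ) * (Kb g r q τ * τ^(-(1+2*s))))
          (Ioi (0:ℝ)) := hintq.const_mul _
      have hptwise : ∀ᵐ τ ∂(volume.restrict (Ioi (0:ℝ))),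
          (N:ℝ) * (Kb g r q τ * τ^(-(1+2*s)))
            ≤ ∑ i, Kb g r (inner ℝ x (ξ i)) τ * τ^(-(1+2*s)) := by
        filter_upwards [ae_restrict_mem measurableSet_Ioi, haer] with τ hτ hτr
        have hj := jensen_pt hgC2 hgconv hN0 hr hτ hτr
          (fun i => (inner ℝ x (ξ i) : ℝ)) hpars hq2
        calc (N:ℝ) * (Kb g r q τ * τ^(-(1+2*s)))
            = ((N:ℝ) * Kb g r q τ) * τ^(-(1+2*s)) := by ring
          _ ≤ (∑ i, Kb g r (inner ℝ x (ξ i)) τ) * τ^(-(1+2*s)) :=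
              mul_le_mul_of_nonneg_right hj (Real.rpow_nonneg hτ.le _)
          _ = ∑ i, Kb g r (inner ℝ x (ξ i)) τ * τ^(-(1+2*s)) := Finset.sum_mul _ _ _
      have hmono2 := integral_mono_ae hNq hsum_int hptwise
      rw [integral_const_mul] at hmono2
      rw [integral_finset_sum _ (fun i _ => hintp i)] at hmono2
      calc (N:ℝ) * val q
          = Cs * ((N:ℝ) * ∫ τ in Ioi (0:ℝ), Kb g r q τ * τ^(-(1+2*s))) := by
            rw [hval]; ring
        _ ≤ Cs * ∑ i, ∫ τ in Ioi (0:ℝ), Kb g r (inner ℝ x (ξ i)) τ * τ^(-(1+2*s)) :=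
            mul_le_mul_of_nonneg_left hmono2 hCs.le
        _ = ∑ i, val (inner ℝ x (ξ i)) := by rw [Finset.mul_sum]
        _ = ∑ i, Iop N s Cs u (ξ i) x :=
            Finset.sum_congr rfl (fun i _ => (hrep _ (hξ.1 i)).symm)
    obtain ⟨η, hηon, hηinner⟩ := exists_equiangular hN0 _ hvnorm
    have hηx : ∀ i, (inner ℝ x (η i) : ℝ) = q := by
      intro i
      have h2 : (inner ℝ x (η i) : ℝ) = r * (inner ℝ (r⁻¹ • x) (η i) : ℝ) := by
        conv_lhs => rw [hxv]
        rw [real_inner_smul_left]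
      rw [h2, hηinner i, hqdef]
    have hsumη : ∑ i, Iop N s Cs u (η i) x = (N:ℝ) * val q := by
      rw [Finset.sum_congr rfl (fun i _ => by rw [hrep _ (hηon.1 i), hηx i])]
      rw [Finset.sum_const, Finset.card_univ, Fintype.card_fin, nsmul_eq_mul]
    have hnonempty : Nonempty {ξ : Fin N → E N // Orthonormal ℝ ξ} := ⟨⟨_, hηon⟩⟩
    have hbdd : BddBelow (Set.range fun ξ : {ξ : Fin N → E N // Orthonormal ℝ ξ} =>
        ∑ i, Iop N s Cs u (ξ.1 i) x) := by
      refine ⟨(N:ℝ) * val q, ?_⟩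
      rintro y ⟨ξ, rfl⟩
      exact hlowN ξ.1 ξ.2
    rw [show (N:ℝ) * Iop N s Cs u ξs x = (N:ℝ) * val q by rw [hIxs]]
    unfold IkMinus
    apply le_antisymm
    · exact (ciInf_le hbdd ⟨_, hηon⟩).trans_eq hsumη
    · exact le_ciInf (fun ξ => hlowN ξ.1 ξ.2)
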